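/- Skew Bollobás inequality (Frankl, Kalai): if (A₁,B₁),…,(A_t,B_t) are pairs of m-element sets with A_i ∩ B_i = ∅ for all i and A_i ∩ B_j ≠ ∅ for all i < j, then t ≤ C(2m, m). -/

import Mathlib

theorem stmt_7 {α : Type*} [DecidableEq α] (t m : ℕ)
    (A B : Fin t → Finset α)
    (hA : ∀ i, (A i).card = m) (hB : ∀ i, (B i).card = m)
    (hdisj : ∀ i, A i ∩ B i = ∅)
    (hskew : ∀ i j : Fin t, i < j → (A i ∩ B j).Nonempty) :
    t ≤ Nat.choose (2 * m) m := by
  classical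
  -- assign distinct rational "coordinates" to the relevant elements
  set U : Finset α := Finset.univ.biUnion (fun i => A i ∪ B i) with hU
  set r : α → ℚ := fun y => (U.toList.idxOf y : ℚ) with hr
  have hrinj : ∀ ⦃x⦄, x ∈ U → ∀ ⦃y⦄, y ∈ U → r x = r y → x = y := by
    intro x hx y hy h
    have hx' : x ∈ U.toList := by simpa using hx
    have hy' : y ∈ U.toList := by simpa using hy
    exact (List.idxOf_inj hx').1 (by simp only [hr] at h; exact_mod_cast h)
  have hAU : ∀ i, ∀ a ∈ A i, a ∈ U := by
    intro i a ha
    simp only [hU, Finset.mem_biUnion]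
    exact ⟨i, Finset.mem_univ i, Finset.mem_union_left _ ha⟩
  have hBU : ∀ i, ∀ b ∈ B i, b ∈ U := by
    intro i b hb
    simp only [hU, Finset.mem_biUnion]
    exact ⟨i, Finset.mem_univ i, Finset.mem_union_right _ hb⟩
  -- one variable polynomials vanishing on A j
  set q : Fin t → Polynomial ℚ := fun j => ∏ a ∈ A j, (Polynomial.X - Polynomial.C (r a))
    with hq
  have hqdeg : ∀ j, (q j).natDegree = m := by
    intro j
    rw [hq, Polynomial.natDegree_prod_of_monic _ _
      (fun a _ => Polynomial.monic_X_sub_C (r a))]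
    simp [Polynomial.natDegree_X_sub_C, hA j]
  have hqeval : ∀ j x, (q j).eval x = ∏ a ∈ A j, (x - r a) := by
    intro j x; simp [hq, Polynomial.eval_prod]
  -- the evaluation points: coefficient vectors of q j
  set w : Fin t → Fin (m + 1) → ℚ := fun j k => (q j).coeff k with hw
  -- degree one forms
  set Lf : α → MvPolynomial (Fin (m + 1)) ℚ :=
    fun y => ∑ k : Fin (m + 1), MvPolynomial.C ((r y) ^ (k : ℕ)) * MvPolynomial.X k with hLf
  -- the polynomials attached to the B i
  set P : Fin t → MvPolynomial (Fin (m + 1)) ℚ := fun i => ∏ y ∈ B i, Lf y with hP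
  have hLhom : ∀ y, (Lf y).IsHomogeneous 1 := by
    intro y
    exact MvPolynomial.IsHomogeneous.sum _ _ _
      (fun k _ => MvPolynomial.isHomogeneous_C_mul_X _ k)
  have hPhom : ∀ i, (P i).IsHomogeneous m := by
    intro i
    have := MvPolynomial.IsHomogeneous.prod (B i) Lf (fun _ => 1) (fun y _ => hLhom y)
    simpa [hB i] using this
  -- evaluation of Lf at w j is evaluation of q j
  have hevalL : ∀ j y, MvPolynomial.eval (w j) (Lf y) = (q j).eval (r y) := by
    intro j y
    rw [hLf]
    rw [Polynomial.eval_eq_sum_range' (n := m + 1) (by rw [hqdeg]; omega)]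
    rw [map_sum]
    rw [← Fin.sum_univ_eq_sum_range (fun k => (q j).coeff k * (r y) ^ k) (m + 1)]
    refine Finset.sum_congr rfl fun k _ => ?_
    simp [hw, mul_comm]
  have hevalP : ∀ i j, MvPolynomial.eval (w j) (P i) = ∏ y ∈ B i, (q j).eval (r y) := by
    intro i j
    rw [hP, map_prod]
    exact Finset.prod_congr rfl fun y _ => hevalL j y
  -- diagonal evaluations are nonzero
  have hdiag : ∀ i, MvPolynomial.eval (w i) (P i) ≠ 0 := by
    intro i
    rw [hevalP]
    refine Finset.prod_ne_zero_iff.2 fun y hy => ?_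
    rw [hqeval]
    refine Finset.prod_ne_zero_iff.2 fun a ha => ?_
    refine sub_ne_zero.2 fun hra => ?_
    have : y = a := hrinj (hBU i y hy) (hAU i a ha) hra
    subst this
    have : y ∈ A i ∩ B i := Finset.mem_inter.2 ⟨ha, hy⟩
    rw [hdisj i] at this
    exact absurd this (Finset.notMem_empty y)
  -- skew evaluations vanish
  have hoff : ∀ i j, i < j → MvPolynomial.eval (w i) (P j) = 0 := by
    intro i j hij
    obtain ⟨y, hy⟩ := hskew i j hij
    obtain ⟨hyA, hyB⟩ := Finset.mem_inter.1 hy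
    rw [hevalP]
    refine Finset.prod_eq_zero hyB ?_
    rw [hqeval]
    exact Finset.prod_eq_zero hyA (by simp)
  -- coefficient vectors of the P i, indexed by degree-m monomials
  set v : Fin t → Sym (Fin (m + 1)) m → ℚ :=
    fun i s => MvPolynomial.coeff (Multiset.toFinsupp (s : Multiset (Fin (m + 1)))) (P i) with hv
  have hli : LinearIndependent ℚ v := by
    rw [Fintype.linearIndependent_iff]
    intro g hg
    set Q : MvPolynomial (Fin (m + 1)) ℚ := ∑ i, g i • P i with hQ
    have hQcoeff : ∀ d, MvPolynomial.coeff d Q = ∑ i, g i * MvPolynomial.coeff d (P i) := by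
      intro d
      rw [hQ, MvPolynomial.coeff_sum]
      exact Finset.sum_congr rfl fun i _ => by rw [MvPolynomial.coeff_smul, smul_eq_mul]
    have hQhom : Q.IsHomogeneous m := by
      refine MvPolynomial.IsHomogeneous.sum _ _ _ fun i _ => ?_
      rw [MvPolynomial.smul_eq_C_mul]
      exact (hPhom i).C_mul _
    have hQ0 : Q = 0 := by
      ext d
      rw [MvPolynomial.coeff_zero]
      by_cases hd : d.degree = m
      · have hcard : Multiset.card (Finsupp.toMultiset d) = m := by
          rw [Finsupp.card_toMultiset]
          simpa [Finsupp.degree_apply, Finsupp.sum] using hd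
        have hs := congrFun hg (Sym.mk (Finsupp.toMultiset d) hcard : Sym (Fin (m + 1)) m)
        simp only [Finset.sum_apply, Pi.smul_apply, smul_eq_mul, Pi.zero_apply, hv] at hs
        rw [hQcoeff d]
        simpa [Finsupp.toMultiset_toFinsupp] using hs
      · exact hQhom.coeff_eq_zero hd
    have heval : ∀ i : Fin t, ∑ j, g j * MvPolynomial.eval (w i) (P j) = 0 := by
      intro i
      have h0 : MvPolynomial.eval (w i) Q = 0 := by rw [hQ0]; simp
      rw [hQ, map_sum] at h0
      refine Eq.trans ?_ h0
      refine Finset.sum_congr rfl fun j _ => ?_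
      rw [MvPolynomial.smul_eq_C_mul, map_mul, MvPolynomial.eval_C]
    have key : ∀ n : ℕ, ∀ i : Fin t, (i : ℕ) < n → g i = 0 := by
      intro n
      induction n with
      | zero => intro i hi; exact absurd hi (Nat.not_lt_zero _)
      | succ n IH =>
        intro i hi
        rcases Nat.lt_succ_iff_lt_or_eq.mp hi with h | h
        · exact IH i h
        · have hsum := heval i
          rw [Finset.sum_eq_single_of_mem i (Finset.mem_univ i) ?_] at hsum
          · exact (mul_eq_zero.mp hsum).resolve_right (hdiag i)
          · intro j _ hji
            rcases lt_or_gt_of_ne hji with hlt | hgt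
            · have : g j = 0 := IH j (by omega)
              rw [this, zero_mul]
            · rw [hoff i j hgt, mul_zero]
    intro i
    exact key t i i.isLt
  -- conclude via dimension count
  calc t = Fintype.card (Fin t) := (Fintype.card_fin t).symm
    _ ≤ Module.finrank ℚ (Sym (Fin (m + 1)) m → ℚ) := hli.fintype_card_le_finrank
    _ = Fintype.card (Sym (Fin (m + 1)) m) := Module.finrank_fintype_fun_eq_card ℚ
    _ = (Fintype.card (Fin (m + 1)) + m - 1).choose m := Sym.card_sym_eq_choose m
    _ = (2 * m).choose m := by rw [Fintype.card_fin]; congr 1; omega
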